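/- Let $p$ be a prime, let $g$ be an integer with $\gcd(g,p)=1$, and let $n$ be the multiplicative order of $g$ modulo $p$. If $n \equiv 1 \pmod 4$, then $Q(g,p)^2 \equiv n \pmod p$, where $Q(g,p) = \sum_{k=1}^{n} g^{k^2} \pmod p$. -/

import Mathlib

open Finset ZMod

section Aux

variable {p : ℕ} [Fact p.Prime]

private lemma qgsAux_sum_sq_eq_zmod {m : ℕ} [NeZero m] {ζ : ZMod p} (hζ : ζ ^ m = 1) :
    ∑ k ∈ range m, ζ ^ (k ^ 2) = ∑ x : ZMod m, ζ ^ ((x ^ 2).val) := by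
  refine Finset.sum_nbij' (fun k => (k : ZMod m)) (fun x => x.val) ?_ ?_ ?_ ?_ ?_
  · intro a _; exact Finset.mem_univ _
  · intro x _; exact Finset.mem_range.mpr (ZMod.val_lt x)
  · intro a ha; simp [ZMod.val_natCast, Nat.mod_eq_of_lt (Finset.mem_range.mp ha)]
  · intro x _; simp [ZMod.natCast_val, ZMod.cast_id]
  · intro k _
    have : ((k : ZMod m) ^ 2) = ((k ^ 2 : ℕ) : ZMod m) := by push_cast; ring
    rw [this, ZMod.val_natCast, ← pow_eq_pow_mod _ hζ]

private lemma qgsAux_geom_sum {x : ZMod p} {q : ℕ} (hx : x ^ q = 1) :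
    ∑ j ∈ range q, x ^ j = if x = 1 then (q : ZMod p) else 0 := by
  split_ifs with h
  · simp [h]
  · rw [geom_sum_eq h, hx, sub_self, zero_div]

private lemma qgsAux_sum_range_mul_decomp {M : Type*} [AddCommMonoid M] (f : ℕ → M) (a b : ℕ) :
    ∑ k ∈ range (a * b), f k = ∑ j ∈ range b, ∑ i ∈ range a, f (a * j + i) := by
  induction b with
  | zero => simp
  | succ b ih =>
      rw [Nat.mul_succ, Finset.sum_range_add, ih, Finset.sum_range_succ]

private lemma qgsAux_chi4_sq {q : ℕ} (hq : q % 2 = 1) : (ZMod.χ₄ q) ^ 2 = 1 := by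
  rw [ZMod.χ₄_nat_eq_if_mod_four]
  have h4 : q % 4 < 4 := Nat.mod_lt _ (by norm_num)
  have := Nat.mod_mod_of_dvd q (by norm_num : 2 ∣ 4)
  interval_cases h : q % 4 <;> simp_all

private lemma qgsAux_sq_prime (hp2 : p ≠ 2) {q : ℕ} (hq : q.Prime) (hq2 : q ≠ 2) {ζ : ZMod p}
    (hord : orderOf ζ = q) :
    (∑ k ∈ range q, ζ ^ (k ^ 2)) ^ 2 = ((ZMod.χ₄ q : ℤ) : ZMod p) * q := by
  haveI : Fact q.Prime := ⟨hq⟩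
  haveI : NeZero q := ⟨hq.ne_zero⟩
  have hζq : ζ ^ q = 1 := by rw [← hord]; exact pow_orderOf_eq_one ζ
  have hprim : IsPrimitiveRoot ζ q := by
    rw [← hord]; exact IsPrimitiveRoot.orderOf ζ
  set ψ : AddChar (ZMod q) (ZMod p) := AddChar.zmodChar q hζq with hψdef
  have hψprim : ψ.IsPrimitive := AddChar.zmodChar_primitive_of_primitive_root q hprim
  set χ : MulChar (ZMod q) (ZMod p) :=
    (quadraticChar (ZMod q)).ringHomComp (Int.castRingHom (ZMod p)) with hχdef
  have hrc : ringChar (ZMod q) ≠ 2 := by rwa [ZMod.ringChar_zmod_n]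
  have hχ1 : χ ≠ 1 := by
    obtain ⟨a, ha⟩ := quadraticChar_exists_neg_one' hrc
    intro h
    have h1 : χ a = 1 := by rw [h]; exact MulChar.one_apply_coe a
    have h2 : χ a = -1 := by
      simp only [hχdef, MulChar.ringHomComp_apply, ha]
      simp
    rw [h1] at h2
    haveI : Fact (2 < p) := ⟨lt_of_le_of_ne (Fact.out : p.Prime).two_le (Ne.symm hp2)⟩
    exact ZMod.neg_one_ne_one h2.symm
  have hχ2 : χ.IsQuadratic := (quadraticChar_isQuadratic (ZMod q)).comp _
  have key : ∑ x : ZMod q, ψ (x ^ 2) = gaussSum χ ψ := by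
    have fib : ∑ x : ZMod q, ψ (x ^ 2)
        = ∑ a : ZMod q, ∑ x ∈ univ.filter (fun x : ZMod q => x ^ 2 = a), ψ (x ^ 2) := by
      rw [Finset.sum_fiberwise_of_maps_to (fun x _ => Finset.mem_univ (x ^ 2))]
    rw [fib]
    have hfib : ∀ a : ZMod q, ∑ x ∈ univ.filter (fun x : ZMod q => x ^ 2 = a), ψ (x ^ 2)
        = (χ a + 1) * ψ a := by
      intro a
      rw [Finset.sum_congr rfl (fun x hx => by
        rw [(Finset.mem_filter.mp hx).2]), Finset.sum_const, nsmul_eq_mul]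
      congr 1
      have hcard := quadraticChar_card_sqrts hrc a
      have hset : (univ.filter (fun x : ZMod q => x ^ 2 = a))
          = {x : ZMod q | x ^ 2 = a}.toFinset := by
        ext x; simp
      rw [hset]
      have h2 : ((({x : ZMod q | x ^ 2 = a}.toFinset).card : ℤ) : ZMod p)
          = ((quadraticChar (ZMod q) a + 1 : ℤ) : ZMod p) := by rw [hcard]
      push_cast at h2 ⊢
      rw [h2]
      simp [hχdef]
    simp_rw [hfib, add_mul, one_mul, Finset.sum_add_distrib]
    have hψne : ψ ≠ 1 := by
      have := hψprim (a := 1) one_ne_zero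
      rwa [AddChar.mulShift_one] at this
    rw [AddChar.sum_eq_zero_of_ne_one hψne, add_zero]
    rfl
  have bridge : ∑ k ∈ range q, ζ ^ (k ^ 2) = ∑ x : ZMod q, ψ (x ^ 2) := by
    rw [qgsAux_sum_sq_eq_zmod hζq]
    exact Finset.sum_congr rfl fun x _ => by rw [hψdef, AddChar.zmodChar_apply]
  rw [bridge, key, gaussSum_sq hχ1 hχ2 hψprim]
  have hneg : χ (-1) = ((ZMod.χ₄ q : ℤ) : ZMod p) := by
    classical
    rw [hχdef, MulChar.ringHomComp_apply, quadraticChar_neg_one hrc, ZMod.card]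
    rfl
  rw [hneg, ZMod.card]

private lemma qgsAux_prime_pow_step {q e : ℕ} (hq : q.Prime) (hq2 : q ≠ 2) {ζ : ZMod p}
    (hord : orderOf ζ = q ^ (e + 2)) :
    ∑ k ∈ range (q ^ (e + 2)), ζ ^ (k ^ 2)
      = (q : ZMod p) * ∑ k ∈ range (q ^ e), (ζ ^ (q * q)) ^ (k ^ 2) := by
  have hζ1 : ζ ^ (q ^ (e + 2)) = 1 := by rw [← hord]; exact pow_orderOf_eq_one ζ
  set n1 := q ^ (e + 1) with hn1
  have hm : q ^ (e + 2) = n1 * q := by rw [hn1, ← pow_succ]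
  have hω : orderOf (ζ ^ n1) = q := by
    rw [orderOf_pow' _ (pow_ne_zero _ hq.ne_zero), hord,
      Nat.gcd_eq_right (pow_dvd_pow q (by omega)), Nat.pow_div (by omega) hq.pos,
      (by omega : e + 2 - (e + 1) = 1), pow_one]
  have hωone : (ζ ^ n1) ^ q = 1 := by rw [← hω]; exact pow_orderOf_eq_one _
  have hωq : ∀ i : ℕ, ((ζ ^ n1) ^ i) ^ q = 1 := by
    intro i
    rw [← pow_mul, mul_comm i q, pow_mul, hωone, one_pow]
  have hn1n1 : ζ ^ (n1 * n1) = 1 := by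
    have h : n1 * n1 = q ^ (e + 2) * q ^ e := by rw [hn1]; ring
    rw [h, pow_mul, hζ1, one_pow]
  have hterm : ∀ j i : ℕ, ζ ^ ((n1 * j + i) ^ 2) = ζ ^ (i ^ 2) * ((ζ ^ n1) ^ (2 * i)) ^ j := by
    intro j i
    have hexp : (n1 * j + i) ^ 2 = i ^ 2 + n1 * (2 * i) * j + n1 * n1 * j ^ 2 := by ring
    rw [hexp, pow_add, pow_add, pow_mul ζ (n1*n1), hn1n1, one_pow, mul_one,
      pow_mul ζ (n1 * (2*i)), pow_mul ζ n1]
  have hiff : ∀ i : ℕ, ((ζ ^ n1) ^ (2 * i) = 1) ↔ q ∣ i := by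
    intro i
    rw [← orderOf_dvd_iff_pow_eq_one, hω]
    constructor
    · intro h
      rcases (Nat.Prime.dvd_mul hq).mp h with h2 | h'
      · exact absurd ((Nat.prime_dvd_prime_iff_eq hq Nat.prime_two).mp h2) hq2
      · exact h'
    · intro h; exact h.mul_left 2
  rw [hm, qgsAux_sum_range_mul_decomp, Finset.sum_comm]
  simp_rw [hterm]
  rw [Finset.sum_congr rfl (fun i _ => by
    rw [← Finset.mul_sum, qgsAux_geom_sum (hωq (2 * i)),
      if_congr (hiff i) rfl rfl])]
  have hsplit : n1 = q * q ^ e := by rw [hn1, pow_succ, mul_comm]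
  rw [hsplit, qgsAux_sum_range_mul_decomp, Finset.mul_sum]
  refine Finset.sum_congr rfl fun j _ => ?_
  rw [Finset.sum_eq_single 0]
  · simp only [add_zero]
    rw [if_pos ⟨j, rfl⟩, ← pow_mul, mul_comm (ζ ^ ((q*j)^2)) _,
      (by ring : q * q * j ^ 2 = (q * j) ^ 2)]
  · intro i hi hne
    rw [if_neg, mul_zero]
    intro hdvd
    have h : q ∣ i := (Nat.dvd_add_right ⟨j, rfl⟩).mp hdvd
    exact hne (Nat.eq_zero_of_dvd_of_lt h (Finset.mem_range.mp hi))
  · intro h; exact absurd (Finset.mem_range.mpr hq.pos) h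

private lemma qgsAux_sq_prime_pow (hp2 : p ≠ 2) {q : ℕ} (hq : q.Prime) (hq2 : q ≠ 2) :
    ∀ e : ℕ, ∀ ζ : ZMod p, orderOf ζ = q ^ e →
      (∑ k ∈ range (q ^ e), ζ ^ (k ^ 2)) ^ 2
        = ((ZMod.χ₄ (q ^ e) : ℤ) : ZMod p) * ((q : ZMod p) ^ e) := by
  have hqodd : q % 2 = 1 := Nat.odd_iff.mp (hq.odd_of_ne_two hq2)
  intro e
  induction e using Nat.strong_induction_on with
  | _ e ih =>
    match e with
    | 0 =>
        intro ζ _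
        simp
    | 1 =>
        intro ζ hord
        rw [pow_one] at hord ⊢
        rw [qgsAux_sq_prime hp2 hq hq2 hord]
        norm_num
    | (e + 2) =>
        intro ζ hord
        have hζ' : orderOf (ζ ^ (q * q)) = q ^ e := by
          rw [orderOf_pow' _ (Nat.mul_ne_zero hq.ne_zero hq.ne_zero), hord]
          have : Nat.gcd (q ^ (e + 2)) (q * q) = q * q := by
            apply Nat.gcd_eq_right
            rw [← pow_two]
            exact pow_dvd_pow q (by omega)
          rw [this, ← pow_two, Nat.pow_div (by omega) hq.pos,
            (by omega : e + 2 - 2 = e)]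
        rw [qgsAux_prime_pow_step hq hq2 hord, mul_pow, ih e (by omega) _ hζ']
        have hχeq : ZMod.χ₄ ((q : ZMod 4) ^ (e + 2)) = ZMod.χ₄ ((q : ZMod 4) ^ e) := by
          rw [map_pow, map_pow, pow_add, qgsAux_chi4_sq hqodd, mul_one]
        rw [hχeq]
        ring

private lemma qgsAux_crt {m1 m2 : ℕ} (h1 : 1 < m1) (h2 : 1 < m2) (hcop : m1.Coprime m2)
    {ζ : ZMod p} (hord : orderOf ζ = m1 * m2) :
    ∃ ξ1 ξ2 : ZMod p, orderOf ξ1 = m1 ∧ orderOf ξ2 = m2 ∧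
      ∑ k ∈ range (m1 * m2), ζ ^ (k ^ 2)
        = (∑ k ∈ range m1, ξ1 ^ (k ^ 2)) * (∑ k ∈ range m2, ξ2 ^ (k ^ 2)) := by
  haveI : NeZero m1 := ⟨by omega⟩
  haveI : NeZero m2 := ⟨by omega⟩
  haveI : NeZero (m1 * m2) := ⟨by positivity⟩
  haveI : Fact (1 < m1) := ⟨h1⟩
  haveI : Fact (1 < m2) := ⟨h2⟩
  have hζ1 : ζ ^ (m1 * m2) = 1 := by rw [← hord]; exact pow_orderOf_eq_one ζ
  set ψ : AddChar (ZMod (m1 * m2)) (ZMod p) := AddChar.zmodChar (m1 * m2) hζ1 with hψ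
  set e := ZMod.chineseRemainder hcop with he
  set c1 : ZMod (m1 * m2) := e.symm (1, 0) with hc1
  set c2 : ZMod (m1 * m2) := e.symm (0, 1) with hc2
  set ξ1 : ZMod p := ζ ^ c1.val with hξ1
  set ξ2 : ZMod p := ζ ^ c2.val with hξ2
  have hecomp : ∀ x : ZMod (m1 * m2), e x = ((x.val : ZMod m1), (x.val : ZMod m2)) := by
    intro x
    have h0 : e x = ZMod.castHom (show Nat.lcm m1 m2 ∣ m1 * m2 by simp [Nat.lcm_dvd_iff])
        (ZMod m1 × ZMod m2) x := rfl
    rw [h0, ZMod.castHom_apply]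
    refine Prod.ext ?_ ?_ <;>
      simp only [Prod.fst_zmod_cast, Prod.snd_zmod_cast] <;>
      exact (ZMod.natCast_val x).symm
  have claimA : ∀ x : ZMod (m1 * m2), ζ ^ x.val = ξ1 ^ (e x).1.val * ξ2 ^ (e x).2.val := by
    intro x
    have hy : x = (e x).1.val • c1 + (e x).2.val • c2 := by
      apply e.injective
      rw [map_add, map_nsmul, map_nsmul, hc1, hc2, RingEquiv.apply_symm_apply,
        RingEquiv.apply_symm_apply]
      refine Prod.ext ?_ ?_ <;>
        simp [ZMod.natCast_val, ZMod.cast_id]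
    have hψx : ψ x = ζ ^ x.val := AddChar.zmodChar_apply _ _
    rw [← hψx]
    nth_rewrite 1 [hy]
    rw [AddChar.map_add_eq_mul, AddChar.map_nsmul_eq_pow, AddChar.map_nsmul_eq_pow]
    congr 1
  have hc1e : e c1 = (1, 0) := by rw [hc1, RingEquiv.apply_symm_apply]
  have hc2e : e c2 = (0, 1) := by rw [hc2, RingEquiv.apply_symm_apply]
  have hc1m1 : (c1.val : ZMod m1) = 1 := by
    have h := (hecomp c1).symm.trans hc1e
    exact (Prod.ext_iff.mp h).1
  have hc1m2 : (c1.val : ZMod m2) = 0 := by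
    have h := (hecomp c1).symm.trans hc1e
    exact (Prod.ext_iff.mp h).2
  have hc2m1 : (c2.val : ZMod m1) = 0 := by
    have h := (hecomp c2).symm.trans hc2e
    exact (Prod.ext_iff.mp h).1
  have hc2m2 : (c2.val : ZMod m2) = 1 := by
    have h := (hecomp c2).symm.trans hc2e
    exact (Prod.ext_iff.mp h).2
  have hm2dvd : m2 ∣ c1.val := (ZMod.natCast_eq_zero_iff _ _).mp hc1m2
  have hm1dvd : m1 ∣ c2.val := (ZMod.natCast_eq_zero_iff _ _).mp hc2m1
  have hco1 : Nat.Coprime m1 c1.val := by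
    have hmod : c1.val % m1 = 1 % m1 :=
      (ZMod.natCast_eq_natCast_iff _ _ _).mp (by rw [Nat.cast_one]; exact hc1m1)
    rw [Nat.Coprime, Nat.gcd_rec, hmod, Nat.one_mod_eq_one.mpr (by omega), Nat.gcd_one_left]
  have hco2 : Nat.Coprime m2 c2.val := by
    have hmod : c2.val % m2 = 1 % m2 :=
      (ZMod.natCast_eq_natCast_iff _ _ _).mp (by rw [Nat.cast_one]; exact hc2m2)
    rw [Nat.Coprime, Nat.gcd_rec, hmod, Nat.one_mod_eq_one.mpr (by omega), Nat.gcd_one_left]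
  have hgcd1 : Nat.gcd (m1 * m2) c1.val = m2 := by
    apply Nat.dvd_antisymm
    · have hd1 : Nat.gcd (m1 * m2) c1.val ∣ c1.val := Nat.gcd_dvd_right _ _
      have hd2 : Nat.gcd (m1 * m2) c1.val ∣ m1 * m2 := Nat.gcd_dvd_left _ _
      have hcg : Nat.Coprime (Nat.gcd (m1 * m2) c1.val) m1 :=
        (Nat.Coprime.coprime_dvd_right hd1 hco1).symm
      exact (Nat.Coprime.dvd_of_dvd_mul_left hcg hd2)
    · exact Nat.dvd_gcd (dvd_mul_left m2 m1) hm2dvd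
  have hgcd2 : Nat.gcd (m1 * m2) c2.val = m1 := by
    apply Nat.dvd_antisymm
    · have hd1 : Nat.gcd (m1 * m2) c2.val ∣ c2.val := Nat.gcd_dvd_right _ _
      have hd2 : Nat.gcd (m1 * m2) c2.val ∣ m1 * m2 := Nat.gcd_dvd_left _ _
      have hcg : Nat.Coprime (Nat.gcd (m1 * m2) c2.val) m2 :=
        (Nat.Coprime.coprime_dvd_right hd1 hco2).symm
      exact (Nat.Coprime.dvd_of_dvd_mul_right hcg hd2)
    · exact Nat.dvd_gcd (dvd_mul_right m1 m2) hm1dvd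
  have hc1ne : c1.val ≠ 0 := by
    intro h0
    rw [h0, Nat.cast_zero] at hc1m1
    exact zero_ne_one hc1m1
  have hc2ne : c2.val ≠ 0 := by
    intro h0
    rw [h0, Nat.cast_zero] at hc2m2
    exact zero_ne_one hc2m2
  have hordξ1 : orderOf ξ1 = m1 := by
    rw [hξ1, orderOf_pow' _ hc1ne, hord, hgcd1, Nat.mul_div_cancel _ (by omega : 0 < m2)]
  have hordξ2 : orderOf ξ2 = m2 := by
    rw [hξ2, orderOf_pow' _ hc2ne, hord, hgcd2, Nat.mul_div_cancel_left _ (by omega : 0 < m1)]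
  refine ⟨ξ1, ξ2, hordξ1, hordξ2, ?_⟩
  have hξ1m : ξ1 ^ m1 = 1 := by rw [← hordξ1]; exact pow_orderOf_eq_one _
  have hξ2m : ξ2 ^ m2 = 1 := by rw [← hordξ2]; exact pow_orderOf_eq_one _
  rw [qgsAux_sum_sq_eq_zmod hζ1, qgsAux_sum_sq_eq_zmod hξ1m, qgsAux_sum_sq_eq_zmod hξ2m,
    Finset.sum_mul_sum]
  rw [← Fintype.sum_prod_type']
  refine Fintype.sum_equiv e.toEquiv _ _ fun x => ?_
  have h1 : ζ ^ ((x ^ 2).val) = ξ1 ^ (e (x ^ 2)).1.val * ξ2 ^ (e (x ^ 2)).2.val := claimA _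
  rw [h1, map_pow]
  rfl

private lemma qgsAux_main (hp2 : p ≠ 2) :
    ∀ m : ℕ, m % 2 = 1 → ∀ ζ : ZMod p, orderOf ζ = m →
      (∑ k ∈ range m, ζ ^ (k ^ 2)) ^ 2 = ((ZMod.χ₄ m : ℤ) : ZMod p) * m := by
  intro m
  induction m using Nat.strong_induction_on with
  | _ m ih =>
    intro hmodd ζ hord
    by_cases hm1 : m = 1
    · subst hm1
      simp
    · have hm0 : m ≠ 0 := by omega
      set q := m.minFac with hqdef
      have hq : q.Prime := Nat.minFac_prime hm1
      have hq2 : q ≠ 2 := by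
        intro h
        have : q ∣ m := Nat.minFac_dvd m
        rw [h] at this
        omega
      set e := m.factorization q with hedef
      have hqe : q ^ e ∣ m := Nat.ordProj_dvd m q
      set t := m / q ^ e with htdef
      have htm : q ^ e * t = m := Nat.ordProj_mul_ordCompl_eq_self m q
      have hqt : ¬ q ∣ t := Nat.not_dvd_ordCompl hq hm0
      have hcop : (q ^ e).Coprime t :=
        Nat.Coprime.pow_left _ ((Nat.Prime.coprime_iff_not_dvd hq).mpr hqt)
      have he1 : 1 ≤ e := by
        rw [hedef]
        exact (Nat.Prime.factorization_pos_of_dvd hq hm0 (Nat.minFac_dvd m))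
      have hqe1 : 1 < q ^ e := by
        calc 1 < q := hq.one_lt
        _ ≤ q ^ e := Nat.le_self_pow (by omega) q
      by_cases ht1 : t = 1
      · rw [ht1, mul_one] at htm
        rw [← htm] at hord ⊢
        exact (qgsAux_sq_prime_pow hp2 hq hq2 e ζ hord).trans (by push_cast; ring)
      · have ht0 : t ≠ 0 := by
          intro h
          rw [h, mul_zero] at htm
          exact hm0 htm.symm
        have ht : 1 < t :=
          Nat.lt_of_le_of_ne (Nat.one_le_iff_ne_zero.mpr ht0) (Ne.symm ht1)
        have htlt : t < m := by
          rw [← htm]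
          exact (Nat.lt_mul_iff_one_lt_left (by omega : 0 < t)).mpr hqe1
        have htodd : t % 2 = 1 := by
          rcases Nat.even_or_odd t with h | h
          · exfalso
            obtain ⟨r, hr⟩ := h
            have : m = 2 * (q ^ e * r) := by rw [← htm, hr]; ring
            omega
          · exact Nat.odd_iff.mp h
        rw [← htm] at hord ⊢
        obtain ⟨ξ1, ξ2, ho1, ho2, hfact⟩ := qgsAux_crt hqe1 ht hcop hord
        rw [hfact, mul_pow, qgsAux_sq_prime_pow hp2 hq hq2 e ξ1 ho1,
          ih t htlt htodd ξ2 ho2]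
        push_cast [map_mul]
        ring

end Aux

/-- The quadratic Gauss-type sum `Q(g,p) = ∑_{k=1}^{n} g^{k²} (mod p)`, where `n` is the
multiplicative order of `g` modulo `p`. -/
def quadGaussSum (p : ℕ) (g : ℤ) (n : ℕ) : ZMod p :=
  ∑ k ∈ Finset.Icc 1 n, (g : ZMod p) ^ (k ^ 2)

/-- If `n`, the multiplicative order of `g` mod `p`, satisfies `n ≡ 1 (mod 4)`,
then `Q(g,p)² ≡ n (mod p)`. -/
theorem quadGaussSum_sq_of_order_one_mod_four (p : ℕ) (hp : p.Prime)
    (g : ℤ) (hg : Int.gcd g p = 1)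
    (n : ℕ) (hn : n = orderOf ((g : ZMod p))) (hn4 : n % 4 = 1) :
    (quadGaussSum p g n) ^ 2 = (n : ZMod p) := by
  haveI : Fact p.Prime := ⟨hp⟩
  set ζ : ZMod p := (g : ZMod p) with hζdef
  have hnpos : 1 ≤ n := by omega
  have hζn : ζ ^ n = 1 := by rw [hn]; exact pow_orderOf_eq_one ζ
  have hfn : ζ ^ (n ^ 2) = 1 := by rw [pow_two, pow_mul, hζn, one_pow]
  have hIcc : quadGaussSum p g n = ∑ k ∈ range n, ζ ^ (k ^ 2) := by
    rw [quadGaussSum]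
    have h1 : Finset.Icc 1 n = Finset.Ico 1 (n + 1) := by rw [Finset.Ico_add_one_right_eq_Icc]
    rw [h1, Finset.sum_Ico_eq_sum_range]
    simp only [Nat.add_sub_cancel]
    have e1 : (∑ i ∈ range n, ζ ^ ((1 + i) ^ 2)) + 1
        = (∑ i ∈ range n, ζ ^ (i ^ 2)) + 1 := by
      calc (∑ i ∈ range n, ζ ^ ((1 + i) ^ 2)) + 1
          = ∑ i ∈ range (n + 1), ζ ^ (i ^ 2) := by
            rw [Finset.sum_range_succ' (fun i => ζ ^ (i ^ 2)) n]
            simp only [pow_two, Nat.zero_mul, pow_zero]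
            congr 1
            refine Finset.sum_congr rfl fun i _ => by rw [add_comm 1 i]
        _ = (∑ i ∈ range n, ζ ^ (i ^ 2)) + 1 := by
            rw [Finset.sum_range_succ, hfn]
    exact add_right_cancel e1
  by_cases hp2 : p = 2
  · subst hp2
    have h01 : ζ = 0 ∨ ζ = 1 := by
      have hv := ZMod.val_lt ζ
      rcases (by omega : ζ.val = 0 ∨ ζ.val = 1) with h | h <;>
        [left; right] <;>
        rw [← ZMod.natCast_zmod_val ζ, h] <;> simp
    rcases h01 with h | h
    · exfalso
      rw [h, zero_pow (by omega : n ≠ 0)] at hζn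
      exact one_ne_zero hζn.symm
    · have hord1 : n = 1 := by rw [hn, h, orderOf_one]
      rw [hIcc, hord1, h]
      norm_num
  · have hmodd : n % 2 = 1 := by
      have h := Nat.mod_mod_of_dvd n (by norm_num : 2 ∣ 4)
      omega
    have hmain := qgsAux_main hp2 n hmodd ζ hn.symm
    rw [hIcc, hmain, ZMod.χ₄_nat_one_mod_four hn4]
    norm_num
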